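/- Let 2 ≤ k ≤ n and A > 0. Then there exist constants c > 0 depending only on n and k, and C > 0 depending only on n, k and A, such that for every λ = (λ_1, …, λ_n) ∈ Γ_k with λ_1 ≥ … ≥ λ_n and λ_n > −A, one has λ_k ≤ c·σ_k(λ)^{1/k} + C. -/

import Mathlib

noncomputable def esymm (n m : ℕ) (lam : Fin n → ℝ) : ℝ :=
  ∑ s ∈ (Finset.univ : Finset (Fin n)).powersetCard m, ∏ i ∈ s, lam i

def GardingCone (n k : ℕ) : Set (Fin n → ℝ) :=
  {lam | ∀ j, 1 ≤ j → j ≤ k → 0 < esymm n j lam}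

/-- Any strictly monotone map `Fin k → Fin n` satisfies `m ≤ e m` on values. -/
lemma aux_le_apply {k n : ℕ} (e : Fin (k + 1) ↪o Fin n) (m : Fin (k + 1)) :
    (m : ℕ) ≤ (e m : ℕ) := by
  induction m using Fin.induction with
  | zero => exact Nat.zero_le _
  | succ i ih =>
    have h2 : e i.castSucc < e i.succ := e.strictMono Fin.castSucc_lt_succ
    have h2' : (e i.castSucc : ℕ) < (e i.succ : ℕ) := h2
    have h3 : (i : ℕ) ≤ (e i.castSucc : ℕ) := by simpa using ih
    simp only [Fin.val_succ]
    omega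

set_option maxHeartbeats 1000000 in
/-- For `2 ≤ k ≤ n` there is `c > 0` (depending only on `n, k`)
such that for every `A > 0` there is `C > 0` (depending only on `n, k, A`) with:
every decreasing `λ ∈ Γ_k` with `λ_n > -A` satisfies `λ_k ≤ c·σ_k(λ)^{1/k} + C`. -/
theorem stmt2 (n k : ℕ) (hk : 2 ≤ k) (hkn : k ≤ n) :
    ∃ c : ℝ, 0 < c ∧ ∀ A : ℝ, 0 < A →
      ∃ C : ℝ, 0 < C ∧ ∀ lam : Fin n → ℝ,
        lam ∈ GardingCone n k →
        (∀ i j : Fin n, i ≤ j → lam j ≤ lam i) →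
        -A < lam ⟨n - 1, by omega⟩ →
        lam ⟨k - 1, by omega⟩ ≤ c * (esymm n k lam) ^ ((1 : ℝ) / (k : ℝ)) + C := by
  obtain ⟨k', rfl⟩ : ∃ k', k = k' + 1 := ⟨k - 1, by omega⟩
  have hN1 : (1 : ℝ) ≤ (n.choose (k' + 1) : ℝ) := by
    exact_mod_cast Nat.choose_pos hkn
  refine ⟨2, by norm_num, fun A hA => ?_⟩
  refine ⟨2 * (n.choose (k' + 1) : ℝ) * A, by nlinarith, fun lam hΓ hsort hlow => ?_⟩
  set N : ℝ := (n.choose (k' + 1) : ℝ) with hNdef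
  have hσ : 0 < esymm n (k' + 1) lam := hΓ (k' + 1) (by omega) le_rfl
  have hkpos : (0 : ℝ) < ((k' + 1 : ℕ) : ℝ) := by positivity
  have hexp : (0 : ℝ) < (1 : ℝ) / ((k' + 1 : ℕ) : ℝ) := by positivity
  have hσp : 0 < (esymm n (k' + 1) lam) ^ ((1 : ℝ) / ((k' + 1 : ℕ) : ℝ)) :=
    Real.rpow_pos_of_pos hσ _
  have hk'n : k' < n := by omega
  set L : ℝ := lam ⟨k', hk'n⟩ with hLdef
  -- all entries are > -A
  have hlow' : ∀ i : Fin n, -A < lam i := by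
    intro i
    refine lt_of_lt_of_le hlow (hsort i ⟨n - 1, by omega⟩ ?_)
    have := i.2; exact Fin.mk_le_mk.mpr (by omega) |>.trans_eq rfl |>.trans_eq rfl
  have hLle : ∀ m : Fin n, (m : ℕ) ≤ k' → L ≤ lam m := by
    intro m hm
    exact hsort m ⟨k', hk'n⟩ (by simpa [Fin.le_def] using hm)
  rcases le_or_gt L (2 * N * A) with hL | hL
  · -- easy case: L is already bounded by the constant
    have : (0:ℝ) < 2 * (esymm n (k' + 1) lam) ^ ((1 : ℝ) / ((k' + 1 : ℕ) : ℝ)) := by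
      positivity
    calc lam ⟨k' + 1 - 1, by omega⟩ = L := rfl
      _ ≤ 2 * (esymm n (k' + 1) lam) ^ ((1 : ℝ) / ((k' + 1 : ℕ) : ℝ)) + 2 * N * A := by
          linarith
  · -- main case
    have hAL : A < L := by nlinarith
    have hL0 : (0 : ℝ) < L := hA.trans hAL
    set P : ℝ := ∏ m : Fin k', lam ⟨(m : ℕ), by omega⟩ with hPdef
    have hPL : ∀ m : Fin k', L ≤ lam ⟨(m : ℕ), by omega⟩ := by
      intro m; exact hLle _ (by exact_mod_cast Nat.le_of_lt_succ (Nat.lt_succ_of_lt m.2))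
    have hP_pos : 0 < P := Finset.prod_pos fun m _ => hL0.trans_le (hPL m)
    have hP_ge : L ^ k' ≤ P := by
      have := Finset.prod_le_prod (s := (Finset.univ : Finset (Fin k')))
        (f := fun _ => L) (g := fun m : Fin k' => lam ⟨(m : ℕ), by omega⟩)
        (fun m _ => hL0.le) (fun m _ => hPL m)
      simpa using this
    -- every k-subset product is bounded below by -(A*P)
    have hterm : ∀ s ∈ (Finset.univ : Finset (Fin n)).powersetCard (k' + 1),
        -(A * P) ≤ ∏ i ∈ s, lam i := by
      intro s hs
      obtain ⟨-, hcard⟩ := Finset.mem_powersetCard.mp hs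
      set e := s.orderEmbOfFin hcard with hedef
      have himg : Finset.image e Finset.univ = s := by
        ext x
        simp only [Finset.mem_image, Finset.mem_univ, true_and]
        constructor
        · rintro ⟨m, rfl⟩; exact s.orderEmbOfFin_mem hcard m
        · intro hx
          have : x ∈ Set.range e := by rw [Finset.range_orderEmbOfFin]; exact hx
          exact this
      have hprod : ∏ i ∈ s, lam i = ∏ m : Fin (k' + 1), lam (e m) := by
        rw [← himg, Finset.prod_image (fun x _ y _ h => e.injective h)]
      rw [hprod]
      by_cases hpos : ∀ m : Fin (k' + 1), 0 ≤ lam (e m)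
      · have h0 : (0:ℝ) ≤ ∏ m : Fin (k' + 1), lam (e m) :=
          Finset.prod_nonneg fun m _ => hpos m
        nlinarith
      · push_neg at hpos
        obtain ⟨m0, hm0⟩ := hpos
        have hlast : lam (e (Fin.last k')) < 0 := by
          refine lt_of_le_of_lt ?_ hm0
          exact hsort (e m0) (e (Fin.last k')) (e.monotone (Fin.le_last m0))
        have habs_last : |lam (e (Fin.last k'))| ≤ A := by
          rw [abs_le]
          exact ⟨(hlow' _).le, hlast.le.trans hA.le⟩
        have habs : ∀ m : Fin k',
            |lam (e m.castSucc)| ≤ lam ⟨(m : ℕ), by omega⟩ := by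
          intro m
          have hle1 : lam (e m.castSucc) ≤ lam ⟨(m : ℕ), by omega⟩ := by
            refine hsort ⟨(m : ℕ), by omega⟩ (e m.castSucc) ?_
            have := aux_le_apply e m.castSucc
            simpa [Fin.le_def] using this
          have hLm : L ≤ lam ⟨(m : ℕ), by omega⟩ := hPL m
          rw [abs_le]
          refine ⟨?_, hle1⟩
          have := hlow' (e m.castSucc)
          nlinarith
        have habs_prod : |∏ m : Fin (k' + 1), lam (e m)| ≤ P * A := by
          rw [Finset.abs_prod, Fin.prod_univ_castSucc]
          have h1 : ∏ m : Fin k', |lam (e m.castSucc)| ≤ P :=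
            Finset.prod_le_prod (fun m _ => abs_nonneg _) (fun m _ => habs m)
          exact mul_le_mul h1 habs_last (abs_nonneg _) hP_pos.le
        have := neg_abs_le (∏ m : Fin (k' + 1), lam (e m))
        nlinarith [abs_nonneg (∏ m : Fin (k' + 1), lam (e m))]
    -- the top subset
    set Ktop : Finset (Fin n) :=
      Finset.image (fun m : Fin (k' + 1) => (⟨(m : ℕ), by omega⟩ : Fin n)) Finset.univ
      with hKdef
    have hKinj : Function.Injective
        (fun m : Fin (k' + 1) => (⟨(m : ℕ), by omega⟩ : Fin n)) := by
      intro a b hab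
      simpa [Fin.ext_iff] using hab
    have hKcard : Ktop.card = k' + 1 := by
      rw [hKdef, Finset.card_image_of_injective _ hKinj, Finset.card_univ, Fintype.card_fin]
    have hKmem : Ktop ∈ (Finset.univ : Finset (Fin n)).powersetCard (k' + 1) :=
      Finset.mem_powersetCard.mpr ⟨Finset.subset_univ _, hKcard⟩
    have hKprod : ∏ i ∈ Ktop, lam i = P * L := by
      rw [hKdef, Finset.prod_image (fun x _ y _ h => hKinj h)]
      rw [Fin.prod_univ_castSucc]
      rfl
    -- sum decomposition
    have hdecomp : ∏ i ∈ Ktop, lam i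
        + ∑ s ∈ ((Finset.univ : Finset (Fin n)).powersetCard (k' + 1)).erase Ktop,
            ∏ i ∈ s, lam i = esymm n (k' + 1) lam := by
      unfold esymm; exact Finset.add_sum_erase _ (fun s => ∏ i ∈ s, lam i) hKmem
    have hcard_erase :
        ((((Finset.univ : Finset (Fin n)).powersetCard (k' + 1)).erase Ktop).card : ℝ) ≤ N := by
      rw [hNdef]
      have h1 := Finset.card_erase_le
        (s := (Finset.univ : Finset (Fin n)).powersetCard (k' + 1)) (a := Ktop)
      have h2 : ((Finset.univ : Finset (Fin n)).powersetCard (k' + 1)).card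
          = n.choose (k' + 1) := by
        rw [Finset.card_powersetCard, Finset.card_univ, Fintype.card_fin]
      exact_mod_cast h1.trans_eq h2
    have hsum_lb : -(N * (A * P)) ≤
        ∑ s ∈ ((Finset.univ : Finset (Fin n)).powersetCard (k' + 1)).erase Ktop,
          ∏ i ∈ s, lam i := by
      have h1 := Finset.card_nsmul_le_sum
        (((Finset.univ : Finset (Fin n)).powersetCard (k' + 1)).erase Ktop)
        (fun s => ∏ i ∈ s, lam i) (-(A * P))
        (fun s hs => hterm s (Finset.mem_of_mem_erase hs))
      rw [nsmul_eq_mul] at h1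
      have hAP : 0 < A * P := mul_pos hA hP_pos
      nlinarith [hcard_erase,
        (Nat.cast_nonneg (((Finset.univ : Finset (Fin n)).powersetCard (k' + 1)).erase
          Ktop).card : (0:ℝ) ≤ _)]
    have s1 : P * L - N * (A * P) ≤ esymm n (k' + 1) lam := by
      rw [← hdecomp, hKprod]; linarith
    have hkey : L ^ (k' + 1) ≤ 2 * esymm n (k' + 1) lam := by
      have s2 : L ≤ 2 * L - 2 * (N * A) := by linarith
      calc L ^ (k' + 1) = L ^ k' * L := pow_succ _ _
        _ ≤ P * L := mul_le_mul_of_nonneg_right hP_ge hL0.le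
        _ ≤ P * (2 * L - 2 * (N * A)) := mul_le_mul_of_nonneg_left s2 hP_pos.le
        _ = 2 * (P * L - N * (A * P)) := by ring
        _ ≤ 2 * esymm n (k' + 1) lam := by linarith
    -- conclude via rpow
    have hfin : L ≤ 2 * (esymm n (k' + 1) lam) ^ ((1 : ℝ) / ((k' + 1 : ℕ) : ℝ)) := by
      have e1 : L = (L ^ (k' + 1 : ℕ)) ^ ((1 : ℝ) / ((k' + 1 : ℕ) : ℝ)) := by
        rw [← Real.rpow_natCast L (k' + 1), ← Real.rpow_mul hL0.le]
        rw [mul_one_div, div_self hkpos.ne', Real.rpow_one]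
      rw [e1]
      calc (L ^ (k' + 1 : ℕ)) ^ ((1 : ℝ) / ((k' + 1 : ℕ) : ℝ))
          ≤ (2 * esymm n (k' + 1) lam) ^ ((1 : ℝ) / ((k' + 1 : ℕ) : ℝ)) :=
            Real.rpow_le_rpow (pow_nonneg hL0.le _) hkey hexp.le
        _ = (2 : ℝ) ^ ((1 : ℝ) / ((k' + 1 : ℕ) : ℝ))
            * (esymm n (k' + 1) lam) ^ ((1 : ℝ) / ((k' + 1 : ℕ) : ℝ)) :=
            Real.mul_rpow (by norm_num) hσ.le
        _ ≤ 2 * (esymm n (k' + 1) lam) ^ ((1 : ℝ) / ((k' + 1 : ℕ) : ℝ)) := by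
            refine mul_le_mul_of_nonneg_right ?_ (Real.rpow_nonneg hσ.le _)
            calc (2 : ℝ) ^ ((1 : ℝ) / ((k' + 1 : ℕ) : ℝ))
                ≤ (2 : ℝ) ^ (1 : ℝ) :=
                  Real.rpow_le_rpow_of_exponent_le (by norm_num)
                    (by rw [div_le_one hkpos]; exact_mod_cast Nat.one_le_iff_ne_zero.mpr (by omega))
              _ = 2 := Real.rpow_one 2

    calc lam ⟨k' + 1 - 1, by omega⟩ = L := rfl
      _ ≤ 2 * (esymm n (k' + 1) lam) ^ ((1 : ℝ) / ((k' + 1 : ℕ) : ℝ)) := hfin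
      _ ≤ 2 * (esymm n (k' + 1) lam) ^ ((1 : ℝ) / ((k' + 1 : ℕ) : ℝ)) + 2 * N * A := by
          nlinarith [hN1, hA]
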